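/- For a C¹ function F : ℝ → Matrix (Fin n) (Fin n) ℂ, the derivative of the matrix exponential satisfies (d/dx) exp(F(x)) = ∫₀¹ exp(y·F(x)) · F'(x) · exp((1−y)·F(x)) dy. -/

import Mathlib

open scoped Matrix.Norms.L2Operator

open NormedSpace intervalIntegral

/-- Key identity: `exp A - exp B = ∫₀¹ exp(y A) (A - B) exp((1-y) B) dy`. -/
lemma exp_sub_exp_integral {n : ℕ} (A B : Matrix (Fin n) (Fin n) ℂ) :
    exp A - exp B =
      ∫ y in (0:ℝ)..1, exp (y • A) * (A - B) * exp ((1 - y) • B) := by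
  have hderiv : ∀ y ∈ Set.uIcc (0:ℝ) 1,
      HasDerivAt (fun u : ℝ => exp (u • A) * exp ((1 - u) • B))
        (exp (y • A) * (A - B) * exp ((1 - y) • B)) y := by
    intro y _
    have h1 : HasDerivAt (fun u : ℝ => exp (u • A)) (exp (y • A) * A) y :=
      hasDerivAt_exp_smul_const A y
    have h2 : HasDerivAt (fun u : ℝ => exp ((1 - u) • B))
        ((-1 : ℝ) • (B * exp ((1 - y) • B))) y := by
      have hin : HasDerivAt (fun u : ℝ => 1 - u) (-1 : ℝ) y := by
        simpa using (hasDerivAt_id' y).const_sub (1:ℝ)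
      exact (hasDerivAt_exp_smul_const' B (1 - y)).scomp y hin
    refine (h1.mul h2).congr_deriv ?_
    simp [mul_sub, sub_mul, mul_assoc, sub_eq_add_neg, add_mul, mul_add]
  have hcont : Continuous fun y : ℝ =>
      exp (y • A) * (A - B) * exp ((1 - y) • B) := by
    exact (((continuous_iff_continuousAt.2 fun X : Matrix (Fin n) (Fin n) ℂ =>
        (NormedSpace.exp_analytic (𝕂 := ℝ) X).continuousAt).comp (continuous_id.smul continuous_const)).mul
      continuous_const).mul ((continuous_iff_continuousAt.2 fun X : Matrix (Fin n) (Fin n) ℂ =>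
        (NormedSpace.exp_analytic (𝕂 := ℝ) X).continuousAt).comp
        ((continuous_const.sub continuous_id).smul continuous_const))
  have := intervalIntegral.integral_eq_sub_of_hasDerivAt hderiv
    (hcont.intervalIntegrable 0 1)
  rw [this]
  simp [NormedSpace.exp_zero]

set_option maxHeartbeats 800000 in
/-- Derivative of the matrix exponential:
`(d/dx) exp(F x) = ∫₀¹ exp(y F x) F'(x) exp((1-y) F x) dy` for a `C¹` matrix-valued `F`. -/
theorem hasDerivAt_exp_of_contDiff (n : ℕ)
    (F F' : ℝ → Matrix (Fin n) (Fin n) ℂ)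
    (hF : ∀ x, HasDerivAt F (F' x) x)
    (hF' : Continuous F') (x : ℝ) :
    HasDerivAt (fun t => NormedSpace.exp (F t))
      (∫ y in (0 : ℝ)..1,
        NormedSpace.exp (y • F x) * F' x * NormedSpace.exp ((1 - y) • F x)) x := by
  set G : ℝ → Matrix (Fin n) (Fin n) ℂ :=
    fun t => if t = x then F' x else slope F x t with hG
  have hΨ : Continuous fun p : Matrix (Fin n) (Fin n) ℂ × Matrix (Fin n) (Fin n) ℂ =>
      ∫ y in (0:ℝ)..1, exp (y • p.1) * p.2 * exp ((1 - y) • F x) := by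
    apply continuous_parametric_intervalIntegral_of_continuous'
    exact (((continuous_iff_continuousAt.2 fun X : Matrix (Fin n) (Fin n) ℂ =>
        (NormedSpace.exp_analytic (𝕂 := ℝ) X).continuousAt).comp
        ((continuous_snd).smul (continuous_fst.comp continuous_fst))).mul
      (continuous_snd.comp continuous_fst)).mul ((continuous_iff_continuousAt.2 fun X : Matrix (Fin n) (Fin n) ℂ =>
        (NormedSpace.exp_analytic (𝕂 := ℝ) X).continuousAt).comp
        ((continuous_const.sub continuous_snd).smul continuous_const))
  have hGcont : Filter.Tendsto G (nhds x) (nhds (F' x)) := by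
    have h1 : Filter.Tendsto (slope F x) (nhdsWithin x {x}ᶜ) (nhds (F' x)) :=
      hasDerivAt_iff_tendsto_slope.mp (hF x)
    have h2 : Filter.Tendsto G (nhdsWithin x {x}ᶜ) (nhds (F' x)) := by
      refine h1.congr' ?_
      filter_upwards [self_mem_nhdsWithin] with t ht
      have ht' : t ≠ x := ht
      simp [hG, if_neg ht']
    have h3 : Filter.Tendsto G (pure x) (nhds (F' x)) := by
      have hx : G x = F' x := by simp [hG]
      simpa [hx] using tendsto_pure_nhds G x
    rw [← nhdsNE_sup_pure x]
    exact h2.sup h3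
  have hFcont : Filter.Tendsto F (nhds x) (nhds (F x)) := (hF x).continuousAt
  have hH : Filter.Tendsto
      (fun t => ∫ y in (0:ℝ)..1, exp (y • F t) * G t * exp ((1 - y) • F x))
      (nhds x)
      (nhds (∫ y in (0:ℝ)..1, exp (y • F x) * F' x * exp ((1 - y) • F x))) := by
    have h := (hΨ.tendsto (F x, F' x)).comp (hFcont.prodMk_nhds hGcont)
    simpa only [Function.comp_def] using h
  rw [hasDerivAt_iff_tendsto_slope]
  refine (hH.mono_left nhdsWithin_le_nhds).congr' ?_
  filter_upwards [self_mem_nhdsWithin] with t ht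
  have ht' : t ≠ x := ht
  have key := exp_sub_exp_integral (F t) (F x)
  rw [slope_def_module, key, ← intervalIntegral.integral_smul]
  refine intervalIntegral.integral_congr fun y _ => ?_
  rw [hG]
  simp only [if_neg ht', slope_def_module]
  rw [mul_smul_comm, smul_mul_assoc]
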